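/- Under the same hypotheses, ‖f − P_{V_N}f‖₂² ≤ (ε/(1−γ))‖f‖₂². -/

import Mathlib

set_option maxHeartbeats 1000000


open scoped ComplexInnerProductSpace

lemma key_identity {H : Type*} [NormedAddCommGroup H] [InnerProductSpace ℂ H]
    {ψ : ℕ → H} (hψ : Orthonormal ℂ ψ) (f : H) (s : Finset ℕ) :
    ‖f - ∑ i ∈ s, ⟪ψ i, f⟫ • ψ i‖ ^ 2 = ‖f‖ ^ 2 - ∑ i ∈ s, ‖⟪ψ i, f⟫‖ ^ 2 := by
  have h₂ :
      (∑ i ∈ s, ∑ j ∈ s, ⟪ψ i, f⟫ * ⟪f, ψ j⟫ * ⟪ψ j, ψ i⟫) =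
        (∑ k ∈ s, ⟪ψ k, f⟫ * ⟪f, ψ k⟫ : ℂ) := by
    classical exact hψ.inner_left_right_finset
  have h₃ : ∀ z : ℂ, Complex.re (z * (starRingEnd ℂ) z) = ‖z‖ ^ 2 := by
    intro z
    rw [Complex.mul_conj]
    simp [Complex.sq_norm, ← Complex.normSq_eq_norm_sq]
  rw [@norm_sub_sq ℂ, sub_add]
  simp only [@norm_sq_eq_re_inner ℂ, inner_sum, sum_inner]
  simp only [inner_smul_right, two_mul, inner_smul_left, inner_conj_symm, ← mul_assoc, h₂,
    add_sub_cancel_right, sub_right_inj]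
  simp only [map_sum, ← inner_conj_symm f, ← h₃]
  simp [RCLike.inner_apply, mul_comm]
  rw [← Finset.sum_sub_distrib]
  refine Finset.sum_congr rfl fun x _ => ?_
  rw [← inner_conj_symm f (ψ x)]
  rw [← Complex.ofReal_pow, Complex.ofReal_re, Complex.sq_norm, Complex.normSq_apply]
  simp only [Complex.conj_re, Complex.conj_im]
  ring

/-- Under the concentration hypothesis `∑ α_k |⟨f,ψ_k⟩|² ≥ (1-ε)‖f‖²`,
the projection `P_{V_N}f` onto the span of the top `N` eigenfunctions satisfies
`‖f - P_{V_N}f‖² ≤ (ε/(1-γ)) ‖f‖²` whenever `α_N ≥ γ ≥ α_{N+1}`. -/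
theorem stmt1
    {H : Type*} [NormedAddCommGroup H] [InnerProductSpace ℂ H]
    (ψ : ℕ → H) (hψ : Orthonormal ℂ ψ)
    (α : ℕ → ℝ) (hmono : Antitone α) (hα : ∀ k, 0 < α k ∧ α k ≤ 1)
    (f : H)
    (ε γ : ℝ) (hε : 0 ≤ ε) (hγ0 : 0 ≤ γ) (hγ1 : γ < 1)
    (N : ℕ) (hγle : ∀ k < N, γ ≤ α k) (hαN : α N ≤ γ)
    (hconc : (1 - ε) * ‖f‖ ^ 2 ≤ ∑' k, α k * ‖⟪ψ k, f⟫‖ ^ 2) :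
    ‖f - ∑ k ∈ Finset.range N, ⟪ψ k, f⟫ • ψ k‖ ^ 2 ≤ ε / (1 - γ) * ‖f‖ ^ 2 := by
  set c : ℕ → ℝ := fun k => ‖⟪ψ k, f⟫‖ ^ 2 with hc
  have hcnn : ∀ k, 0 ≤ c k := fun k => by positivity
  have hsumc : Summable c := hψ.inner_products_summable f
  have hsumac : Summable (fun k => α k * c k) := by
    refine Summable.of_nonneg_of_le (fun k => mul_nonneg (hα k).1.le (hcnn k))
      (fun k => ?_) hsumc
    have := (hα k).2
    nlinarith [hcnn k, (hα k).1]
  set S : ℝ := ∑ k ∈ Finset.range N, c k with hS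
  -- split the tsum
  have hsplit : ∑' k, α k * c k
      = ∑ k ∈ Finset.range N, α k * c k + ∑' k, α (N + k) * c (N + k) := by
    rw [← Summable.sum_add_tsum_nat_add N hsumac]
    simp [add_comm]
  have hsplitc : ∑' k, c k = S + ∑' k, c (N + k) := by
    rw [← Summable.sum_add_tsum_nat_add N hsumc]
    simp [add_comm, hS]
  have htailnn : 0 ≤ ∑' k, c (N + k) := tsum_nonneg fun k => hcnn _
  have hbound1 : ∑ k ∈ Finset.range N, α k * c k ≤ S := by
    apply Finset.sum_le_sum
    intro k _
    nlinarith [(hα k).2, hcnn k, (hα k).1]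
  have hbound2 : ∑' k, α (N + k) * c (N + k) ≤ γ * ∑' k, c (N + k) := by
    rw [← tsum_mul_left]
    refine Summable.tsum_le_tsum (fun k => ?_) (by simpa [add_comm] using (summable_nat_add_iff N).2 hsumac) ?_
    · have hαk : α (N + k) ≤ γ := le_trans (hmono (Nat.le_add_right N k)) hαN
      nlinarith [hcnn (N + k), (hα (N + k)).1]
    · exact (by simpa [add_comm] using ((summable_nat_add_iff N).2 hsumc).mul_left γ : Summable fun k => γ * c (N + k))
  have hbessel : ∑' k, c k ≤ ‖f‖ ^ 2 := hψ.tsum_inner_products_le f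
  have htail_le : ∑' k, c (N + k) ≤ ‖f‖ ^ 2 - S := by linarith [hsplitc, hbessel]
  have hmain : (1 - ε) * ‖f‖ ^ 2 ≤ S + γ * (‖f‖ ^ 2 - S) := by
    calc (1 - ε) * ‖f‖ ^ 2 ≤ ∑' k, α k * c k := hconc
    _ = ∑ k ∈ Finset.range N, α k * c k + ∑' k, α (N + k) * c (N + k) := hsplit
    _ ≤ S + γ * ∑' k, c (N + k) := add_le_add hbound1 hbound2
    _ ≤ S + γ * (‖f‖ ^ 2 - S) := by nlinarith [htail_le, htailnn]
  have hkey := key_identity hψ f (Finset.range N)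
  rw [hkey, div_mul_eq_mul_div, le_div_iff₀ (by linarith : (0:ℝ) < 1 - γ)]
  nlinarith [hmain]
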